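/- Let λ ∈ ℤ_p and let f_λ = (1+t)^λ + (1+t)^{−λ} + (1+t) + (1+t)^{−1} − 4 ∈ 𝔽_p[[t]], where p is an odd prime and (1+t)^λ is defined by continuity (λ ↦ (1+t)^λ is the continuous extension of integer exponentiation). Then the t-adic order of f_λ is strictly less than p. -/

import Mathlib

open PowerSeries

lemma appr_cast_zmod (p : ℕ) [Fact p.Prime] (x : ℤ_[p]) (n : ℕ) (hn : 1 ≤ n) :
    ((x.appr n : ZMod p)) = PadicInt.toZMod x := by
  have h := PadicInt.appr_spec n x
  have hmem : x - x.appr n ∈ RingHom.ker (PadicInt.toZMod (p := p)) := by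
    rw [PadicInt.ker_toZMod, PadicInt.maximalIdeal_eq_span_p]
    exact Ideal.span_singleton_le_span_singleton.mpr (dvd_pow_self _ (by omega)) h
  have h0 : PadicInt.toZMod x - PadicInt.toZMod ((x.appr n : ℕ) : ℤ_[p]) = 0 := by
    rw [← map_sub]; exact hmem
  have h2 : PadicInt.toZMod ((x.appr n : ℕ) : ℤ_[p]) = ((x.appr n : ZMod p)) := by
    simp
  rw [h2] at h0
  exact (sub_eq_zero.mp h0).symm

lemma choose_pred_cast (p : ℕ) [Fact p.Prime] (m : ℕ) :
    ((m.choose (p - 1) : ZMod p)) = if (m : ZMod p) = -1 then 1 else 0 := by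
  have hp := (Fact.out : p.Prime).two_le
  have hlucas := Choose.choose_modEq_choose_mod_mul_choose_div (n := m) (k := p - 1) (p := p)
  have hk1 : (p - 1) % p = p - 1 := Nat.mod_eq_of_lt (by omega)
  have hk2 : (p - 1) / p = 0 := Nat.div_eq_of_lt (by omega)
  rw [hk1, hk2, Nat.choose_zero_right] at hlucas
  push_cast at hlucas
  rw [mul_one] at hlucas
  have hcast : ((m.choose (p - 1) : ZMod p)) = (((m % p).choose (p - 1) : ZMod p)) := by
    have := (ZMod.intCast_eq_intCast_iff _ _ _).mpr hlucas
    exact_mod_cast this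
  rw [hcast]
  have hmp : m % p < p := Nat.mod_lt _ (by omega)
  by_cases hm : m % p = p - 1
  · have hmc : ((m : ℕ) : ZMod p) = -1 := by
      have h1 : ((m % p : ℕ) : ZMod p) = ((m : ℕ) : ZMod p) := ZMod.natCast_mod m p
      rw [hm] at h1
      rw [← h1]
      push_cast [Nat.cast_sub (by omega : 1 ≤ p)]
      simp
    rw [hm, Nat.choose_self, if_pos hmc]
    simp
  · rw [Nat.choose_eq_zero_of_lt (by omega)]
    rw [if_neg ?_]
    · simp
    · intro hc
      apply hm
      have : ((m % p : ℕ) : ZMod p) = ((p - 1 : ℕ) : ZMod p) := by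
        push_cast [Nat.cast_sub (by omega : 1 ≤ p)]
        simpa using hc
      have := congrArg ZMod.val this
      rwa [ZMod.val_natCast_of_lt hmp, ZMod.val_natCast_of_lt (by omega)] at this

/-- `(1+t)^λ` for a p-adic integer `λ`: the continuous extension of integer
exponentiation of the 1-unit `1+t` in 𝔽_p[[t]].  Its `n`-th coefficient is the
binomial coefficient `C(λ, n)` reduced mod `p`, computed (via Lucas' theorem)
from the natural number `λ.appr (n+1)` congruent to `λ` modulo `p^(n+1)`. -/
noncomputable def onePlusTPow (p : ℕ) [Fact p.Prime] (lam : ℤ_[p]) :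
    PowerSeries (ZMod p) :=
  PowerSeries.mk fun n => ((lam.appr (n + 1)).choose n : ZMod p)

/-- For an odd prime p and λ ∈ ℤ_p, the t-adic order of
f_λ = (1+t)^λ + (1+t)^{−λ} + (1+t) + (1+t)^{−1} − 4 in 𝔽_p[[t]] is less than p. -/
theorem stmt17 (p : ℕ) [Fact p.Prime] (hp : 2 < p) (lam : ℤ_[p]) :
    (onePlusTPow p lam + onePlusTPow p (-lam) + (1 + X) + onePlusTPow p (-1)
        - 4 : PowerSeries (ZMod p)).order < (p : ℕ∞) := by
  have hp1 : 1 ≤ p := by omega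
  have hc : (coeff (p - 1))
      (onePlusTPow p lam + onePlusTPow p (-lam) + (1 + X) + onePlusTPow p (-1)
        - 4 : PowerSeries (ZMod p)) ≠ 0 := by
    have hkey : ∀ x : ℤ_[p], (coeff (p - 1)) (onePlusTPow p x)
        = if PadicInt.toZMod x = -1 then 1 else 0 := by
      intro x
      rw [onePlusTPow, coeff_mk, show p - 1 + 1 = p by omega, choose_pred_cast,
        appr_cast_zmod p x p hp1]
    have two_ne : (2 : ZMod p) ≠ 0 := by
      intro h
      have : ((2 : ℕ) : ZMod p) = 0 := by exact_mod_cast h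
      rw [ZMod.natCast_eq_zero_iff] at this
      exact absurd (Nat.le_of_dvd two_pos this) (by omega)
    have one_ne : (1 : ZMod p) ≠ 0 := one_ne_zero
    simp only [map_sub, map_add, hkey]
    have hA : (coeff (p - 1)) (1 : PowerSeries (ZMod p)) = 0 := by
      rw [coeff_one, if_neg (by omega)]
    have hB : (coeff (p - 1)) (X : PowerSeries (ZMod p)) = 0 := by
      rw [coeff_X, if_neg (by omega)]
    have h4 : (coeff (p - 1)) (4 : PowerSeries (ZMod p)) = 0 := by
      have : (4 : PowerSeries (ZMod p)) = C (4 : ZMod p) := by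
        simp [map_ofNat]
      rw [this, coeff_C, if_neg (by omega)]
    rw [hA, hB, h4, add_zero, add_zero, sub_zero]
    have hneg1 : PadicInt.toZMod (-1 : ℤ_[p]) = -1 := by simp
    rw [if_pos hneg1]
    by_cases ha : PadicInt.toZMod lam = -1
    · have hb : ¬ (PadicInt.toZMod (-lam) = -1) := by
        intro hb
        rw [map_neg, ha] at hb
        apply two_ne
        have : (1 : ZMod p) + 1 = 0 := by linear_combination hb
        linear_combination this
      rw [if_pos ha, if_neg hb]
      intro h
      exact two_ne (by linear_combination h)
    · rw [if_neg ha]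
      by_cases hb : PadicInt.toZMod (-lam) = -1
      · rw [if_pos hb]
        intro h
        exact two_ne (by linear_combination h)
      · rw [if_neg hb]
        intro h
        exact one_ne (by linear_combination h)
  calc (onePlusTPow p lam + onePlusTPow p (-lam) + (1 + X) + onePlusTPow p (-1)
        - 4 : PowerSeries (ZMod p)).order ≤ ((p - 1 : ℕ) : ℕ∞) := order_le _ hc
    _ < (p : ℕ∞) := by exact_mod_cast Nat.sub_lt (by omega) one_pos
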